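/- arXiv:1310.3116 — 8 statements merged into one kernel-verified Lean document; each statement's English description precedes it below -/
import Mathlib

section
/- Let R be a commutative ring, N a natural number, and x : {0,…,N} → R. Let V be the (N+1)×(N+1) Vandermonde matrix with entries V_{i,k} = x_i^k, and let M be the (N+1)×(N+1) matrix with entries M_{k,j} = (−1)^{N−k} e_{N−k}^{(j)}, where e_r^{(j)} denotes the r-th elementary symmetric polynomial in the N variables x_0,…,x_{j−1},x_{j+1},…,x_N (omitting x_j). Then for all i,j ∈ {0,…,N}, the (i,j) entry of the product V·M equals ∏_{l=0, l≠j}^{N} (x_i − x_l); in particular V·M is the diagonal matrix with j-th diagonal entry ∏_{l≠j}(x_j − x_l). -/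
open Finset in
lemma key_vieta {R : Type*} [CommRing R] {ι : Type*} [DecidableEq ι] (N : ℕ) (s : Finset ι)
    (hs : s.card = N) (x : ι → R) (y : R) :
    ∏ l ∈ s, (y - x l) =
      ∑ k ∈ Finset.range (N+1),
        y ^ k * ((-1:R)^(N-k) * ∑ t ∈ s.powersetCard (N-k), ∏ l ∈ t, x l) := by
  have h1 : ∏ l ∈ s, (y - x l) = ∏ l ∈ s, ((-x l) + y) := by
    apply Finset.prod_congr rfl; intro l _; ring
  rw [h1, Finset.prod_add, Finset.sum_powerset, hs]
  conv_rhs => rw [← Finset.sum_range_reflect _ (N+1)]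
  apply Finset.sum_congr rfl
  intro r hr
  rw [Finset.mem_range] at hr
  have hrN : r ≤ N := Nat.lt_succ_iff.mp hr
  have h2 : N + 1 - 1 - r = N - r := by omega
  have h3 : N - (N - r) = r := by omega
  rw [h2, h3, Finset.mul_sum, Finset.mul_sum]
  apply Finset.sum_congr rfl
  intro t ht
  rw [Finset.mem_powersetCard] at ht
  rw [Finset.prod_const, Finset.card_sdiff_of_subset ht.1, hs, ht.2]
  have h4 : ∏ l ∈ t, (-x l) = (-1:R)^r * ∏ l ∈ t, x l := by
    rw [← ht.2, ← Finset.prod_const, ← Finset.prod_mul_distrib]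
    simp
  rw [h4]; ring

open Finset in
/-- Lemma 1 (Vandermonde times the signed elementary-symmetric matrix is diagonal):
for a commutative ring `R` and `x : Fin (N+1) → R`, with `V` the Vandermonde matrix
`V i k = x i ^ k` and `M k j = (-1)^(N-k) * e_{N-k}^{(j)}` (elementary symmetric polynomial
in the variables `x l`, `l ≠ j`), one has `(V * M) i j = ∏_{l ≠ j} (x i - x l)`, and
`V * M` is the diagonal matrix with entries `∏_{l ≠ j} (x j - x l)`. -/
theorem vandermonde_mul_esymm_matrix
    (R : Type*) [CommRing R] (N : ℕ) (x : Fin (N + 1) → R)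
    (M : Matrix (Fin (N + 1)) (Fin (N + 1)) R)
    (hM : ∀ k j : Fin (N + 1), M k j =
      (-1 : R) ^ (N - k.val) *
        ∑ t ∈ (Finset.univ.erase j).powersetCard (N - k.val), ∏ l ∈ t, x l) :
    (∀ i j : Fin (N + 1),
      (Matrix.vandermonde x * M) i j = ∏ l ∈ Finset.univ.erase j, (x i - x l)) ∧
    Matrix.vandermonde x * M =
      Matrix.diagonal fun j => ∏ l ∈ Finset.univ.erase j, (x j - x l) := by
  have hcard : ∀ j : Fin (N+1), (Finset.univ.erase j).card = N := by
    intro j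
    rw [Finset.card_erase_of_mem (Finset.mem_univ j), Finset.card_univ, Fintype.card_fin]
    omega
  have h : ∀ i j : Fin (N + 1),
      (Matrix.vandermonde x * M) i j = ∏ l ∈ Finset.univ.erase j, (x i - x l) := by
    intro i j
    rw [Matrix.mul_apply]
    simp only [Matrix.vandermonde_apply, hM]
    rw [key_vieta N (Finset.univ.erase j) (hcard j) x (x i)]
    exact Fin.sum_univ_eq_sum_range
      (fun k => x i ^ k * ((-1:R)^(N-k) *
        ∑ t ∈ (Finset.univ.erase j).powersetCard (N-k), ∏ l ∈ t, x l)) (N+1)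
  refine ⟨h, ?_⟩
  ext i j
  rw [h i j, Matrix.diagonal_apply]
  by_cases hij : i = j
  · simp [hij]
  · rw [if_neg hij]
    exact Finset.prod_eq_zero (Finset.mem_erase.mpr ⟨hij, Finset.mem_univ i⟩) (sub_self _)
end

section
/- Let F be a field, N a natural number, and x : {0,…,N} → F injective (the values x_0,…,x_N are mutually distinct). Then the Vandermonde matrix V with entries V_{i,k} = x_i^k is invertible, and the entries of its inverse are given explicitly by (V^{−1})_{k,j} = (−1)^{N−k} e_{N−k}^{(j)} / ∏_{l=0, l≠j}^{N} (x_j − x_l), for all k,j ∈ {0,…,N}, where e_r^{(j)} is the r-th elementary symmetric polynomial in the N values x_0,…,x_{j−1},x_{j+1},…,x_N (omitting x_j). -/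
open Finset Polynomial in
/-- Explicit inverse of a Vandermonde matrix on mutually distinct values:
`(V⁻¹) k j = (-1)^(N-k) e_{N-k}^{(j)} / ∏_{l ≠ j} (x j - x l)`. -/
theorem vandermonde_inv_entries
    (F : Type*) [Field F] (N : ℕ) (x : Fin (N + 1) → F)
    (hx : Function.Injective x) :
    IsUnit (Matrix.vandermonde x) ∧
    ∀ k j : Fin (N + 1),
      (Matrix.vandermonde x)⁻¹ k j =
        ((-1 : F) ^ (N - k.val) *
          ∑ t ∈ (Finset.univ.erase j).powersetCard (N - k.val), ∏ l ∈ t, x l) /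
        ∏ l ∈ Finset.univ.erase j, (x j - x l) := by
  classical
  have hdet : (Matrix.vandermonde x).det ≠ 0 :=
    Matrix.det_vandermonde_ne_zero_iff.mpr hx
  have hUnit : IsUnit (Matrix.vandermonde x) := by
    rw [Matrix.isUnit_iff_isUnit_det]
    exact hdet.isUnit
  refine ⟨hUnit, ?_⟩
  set B : Matrix (Fin (N + 1)) (Fin (N + 1)) F := fun k j =>
    ((-1 : F) ^ (N - k.val) *
      ∑ t ∈ (Finset.univ.erase j).powersetCard (N - k.val), ∏ l ∈ t, x l) /
    ∏ l ∈ Finset.univ.erase j, (x j - x l) with hB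
  suffices h : Matrix.vandermonde x * B = 1 by
    intro k j
    rw [Matrix.inv_eq_right_inv h]
  ext i j
  -- set up the polynomial ∏_{l ≠ j} (X - x l)
  set s : Finset (Fin (N + 1)) := Finset.univ.erase j with hs
  have hcard : s.card = N := by
    simp [hs, Finset.card_erase_of_mem]
  set P : Polynomial F := ∏ l ∈ s, (X - C (x l)) with hP
  have hPm : ((s.val.map x).map fun t => X - C t).prod = P := by
    rw [hP, Finset.prod, Multiset.map_map]; rfl
  have hcardm : Multiset.card (s.val.map x) = N := by simp [hcard]
  have hcoeff : ∀ k : ℕ, k ≤ N → P.coeff k =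
      (-1 : F) ^ (N - k) * ∑ t ∈ s.powersetCard (N - k), ∏ l ∈ t, x l := by
    intro k hk
    have := Multiset.prod_X_sub_C_coeff (s.val.map x) (k := k) (by rw [hcardm]; exact hk)
    rw [hPm, hcardm] at this
    rw [this, Finset.esymm_map_val]
  have hdeg : P.natDegree = N := by
    rw [hP]
    rw [Polynomial.natDegree_prod _ _ (fun l _ => X_sub_C_ne_zero (x l))]
    simp [hcard]
  have heval : ∀ y : F, P.eval y = ∑ k ∈ Finset.range (N + 1), P.coeff k * y ^ k := by
    intro y
    rw [Polynomial.eval_eq_sum_range, hdeg]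
  have hevalP : ∀ y : F, P.eval y = ∏ l ∈ s, (y - x l) := by
    intro y; simp [hP, eval_prod]
  have hD : (∏ l ∈ s, (x j - x l)) ≠ 0 := by
    refine Finset.prod_ne_zero_iff.mpr fun l hl => ?_
    have : l ≠ j := Finset.ne_of_mem_erase hl
    exact sub_ne_zero_of_ne fun h => this (hx h.symm)
  rw [Matrix.mul_apply]
  have hsum : ∑ k : Fin (N + 1), Matrix.vandermonde x i k * B k j
      = P.eval (x i) / ∏ l ∈ s, (x j - x l) := by
    rw [heval, Finset.sum_div,
      show (∑ k : Fin (N + 1), Matrix.vandermonde x i k * B k j)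
        = ∑ k ∈ Finset.range (N + 1), x i ^ k *
            (((-1 : F) ^ (N - k) * ∑ t ∈ s.powersetCard (N - k), ∏ l ∈ t, x l) /
              ∏ l ∈ s, (x j - x l))
      from Fin.sum_univ_eq_sum_range (fun k => x i ^ k *
            (((-1 : F) ^ (N - k) * ∑ t ∈ s.powersetCard (N - k), ∏ l ∈ t, x l) /
              ∏ l ∈ s, (x j - x l))) (N + 1)]
    refine Finset.sum_congr rfl fun k hk => ?_
    have hkN : k ≤ N := by
      have := Finset.mem_range.mp hk; omega
    rw [hcoeff k hkN]
    field_simp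
  rw [hsum]
  by_cases hij : i = j
  · subst hij
    rw [hevalP, Matrix.one_apply_eq, div_self hD]
  · rw [hevalP]
    have hi : i ∈ s := Finset.mem_erase.mpr ⟨hij, Finset.mem_univ i⟩
    rw [Finset.prod_eq_zero hi (by simp), Matrix.one_apply_ne hij, zero_div]
end

section
/- (Proposition 2(1).) Assume P and Q are Hermitian. Then for each n ∈ {0,…,N}, every entry of the Wigner matrix W(n) is real: W(n)_{k,l} = conj(W(n)_{k,l}) for all k,l ∈ {0,…,N}. -/
open Matrix

/-- The Weyl-symmetrized operator `Ĝ_{a,b}(P,Q)`: `1/C(a+b,a)` times the sum over all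
subsets `S` of `{1,…,a+b}` of size `a` of the ordered product `X_1 ⋯ X_{a+b}` with
`X_i = P` if `i ∈ S` and `X_i = Q` otherwise. -/
noncomputable def weylG {N : ℕ} (P Q : Matrix (Fin (N + 1)) (Fin (N + 1)) ℂ) (a b : ℕ) :
    Matrix (Fin (N + 1)) (Fin (N + 1)) ℂ :=
  (((a + b).choose a : ℂ))⁻¹ •
    ∑ S ∈ Finset.univ.filter (fun S : Finset (Fin (a + b)) => S.card = a),
      (List.ofFn fun i : Fin (a + b) => if i ∈ S then P else Q).prod

/-- The matrix `Z(n)` with entries `Z(n)_{a,b} = (Ĝ_{a,b}(P,Q))_{n,n}`, `a,b ∈ {0,…,N}`. -/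
noncomputable def zMat {N : ℕ} (P Q : Matrix (Fin (N + 1)) (Fin (N + 1)) ℂ)
    (n : Fin (N + 1)) : Matrix (Fin (N + 1)) (Fin (N + 1)) ℂ :=
  Matrix.of fun a b : Fin (N + 1) => weylG P Q a.val b.val n n

/-- The Wigner matrix `W(n) = V(p)⁻ᵀ ⬝ Z(n) ⬝ V(q)⁻¹`, where `V(x)` is the Vandermonde
matrix on the spectrum `x` (regarded as a complex matrix). -/
noncomputable def wignerW {N : ℕ} (P Q : Matrix (Fin (N + 1)) (Fin (N + 1)) ℂ)
    (p q : Fin (N + 1) → ℝ) (n : Fin (N + 1)) : Matrix (Fin (N + 1)) (Fin (N + 1)) ℂ :=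
  ((Matrix.vandermonde fun k => (p k : ℂ))ᵀ)⁻¹ * zMat P Q n *
    (Matrix.vandermonde fun l => (q l : ℂ))⁻¹

/- Auxiliary lemmas -/

lemma ofFn_reverse' {α : Type*} {n : ℕ} (f : Fin n → α) :
    (List.ofFn f).reverse = List.ofFn (fun i => f i.rev) := by
  apply List.ext_getElem
  · simp
  · intro i h1 h2
    simp only [List.getElem_reverse, List.getElem_ofFn, List.length_ofFn,
      List.length_reverse] at *
    congr 1
    ext
    simp only [Fin.rev, Fin.val_mk]
    omega

lemma weylG_herm {N : ℕ} {P Q : Matrix (Fin (N + 1)) (Fin (N + 1)) ℂ}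
    (hP : P.IsHermitian) (hQ : Q.IsHermitian) (a b : ℕ) :
    (weylG P Q a b)ᴴ = weylG P Q a b := by
  unfold weylG
  rw [Matrix.conjTranspose_smul, Matrix.conjTranspose_sum]
  congr 1
  · simp
  refine Finset.sum_nbij' (i := fun S => Finset.map Fin.revPerm.toEmbedding S)
    (j := fun S => Finset.map Fin.revPerm.toEmbedding S) ?_ ?_ ?_ ?_ ?_
  · intro S hS; simpa using hS
  · intro S hS; simpa using hS
  · intro S _
    ext x
    simp [Finset.mem_map_equiv]
  · intro S _
    ext x
    simp [Finset.mem_map_equiv]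
  · intro S _
    rw [Matrix.conjTranspose_list_prod, List.map_ofFn, ofFn_reverse']
    congr 1
    ext i : 1
    simp [Function.comp_apply, apply_ite conjTranspose, hP.eq, hQ.eq,
      Finset.mem_map_equiv, Fin.revPerm]

lemma map_conj_eq {n : Type*} (M : Matrix n n ℂ) :
    M.map (starRingEnd ℂ) = (Mᴴ)ᵀ := by
  ext i j
  simp [Matrix.conjTranspose_apply]

lemma map_conj_inv {n : Type*} [Fintype n] [DecidableEq n] (M : Matrix n n ℂ) :
    (M⁻¹).map (starRingEnd ℂ) = (M.map (starRingEnd ℂ))⁻¹ := by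
  rw [map_conj_eq, map_conj_eq, Matrix.conjTranspose_nonsing_inv,
    Matrix.transpose_nonsing_inv]

/-- Proposition 2(1): if `P` and `Q` are Hermitian, every entry of the Wigner matrix
`W(n)` is real. -/
theorem wignerW_real {N : ℕ} (P Q : Matrix (Fin (N + 1)) (Fin (N + 1)) ℂ)
    (hP : P.IsHermitian) (hQ : Q.IsHermitian)
    (p q : Fin (N + 1) → ℝ) (hp : Function.Injective p) (hq : Function.Injective q)
    (n : Fin (N + 1)) :
    ∀ k l : Fin (N + 1),
      wignerW P Q p q n k l = (starRingEnd ℂ) (wignerW P Q p q n k l) := by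
  have hV : ∀ (r : Fin (N + 1) → ℝ),
      (Matrix.vandermonde fun k => ((r k : ℂ))).map (starRingEnd ℂ)
        = Matrix.vandermonde fun k => ((r k : ℂ)) := by
    intro r
    ext i j
    simp [Matrix.vandermonde, ← Complex.ofReal_pow]
  have hZ : (zMat P Q n).map (starRingEnd ℂ) = zMat P Q n := by
    ext a b
    have := congrArg (fun M => M n n) (weylG_herm hP hQ a.val b.val)
    simpa [zMat, Matrix.conjTranspose_apply] using this
  have hW : (wignerW P Q p q n).map (starRingEnd ℂ) = wignerW P Q p q n := by
    unfold wignerW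
    rw [Matrix.map_mul, Matrix.map_mul, map_conj_inv, map_conj_inv, hZ]
    rw [show ((Matrix.vandermonde fun k => ((p k : ℂ)))ᵀ).map (starRingEnd ℂ)
        = (Matrix.vandermonde fun k => ((p k : ℂ)))ᵀ by
      ext i j
      have := congrFun (congrFun (hV p) j) i
      simpa using this]
    rw [hV q]
  intro k l
  have := congrFun (congrFun hW k) l
  simp only [Matrix.map_apply] at this
  exact this.symm
end

section
/- (Proposition 2(2), position marginal.) Assume u_0,…,u_N is an orthonormal basis of ℂ^{N+1} such that Q u_l = q_l u_l for each l ∈ {0,…,N}. Then for each n and each l ∈ {0,…,N}, the column sums of the Wigner matrix recover the position probability distribution: ∑_{k=0}^{N} W(n)_{k,l} = |(u_l)_n|², where (u_l)_n denotes the n-th coordinate of u_l (the position wavefunction value φ_n(q_l)). -/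
open Matrix

lemma weylG_zero_left {N : ℕ} (P Q : Matrix (Fin (N + 1)) (Fin (N + 1)) ℂ) (b : ℕ) :
    weylG P Q 0 b = Q ^ b := by
  unfold weylG
  rw [Nat.choose_zero_right]
  have h : (Finset.univ.filter (fun S : Finset (Fin (0 + b)) => S.card = 0)) = {∅} := by
    ext S
    simp [Finset.card_eq_zero]
  rw [h, Finset.sum_singleton]
  simp [List.ofFn_const, List.prod_replicate]

/-- Proposition 2(2), position marginal: if `u₀,…,u_N` is an orthonormal basis of `ℂ^{N+1}`
of eigenvectors of `Q` with `Q uₗ = qₗ uₗ`, then the column sums of the Wigner matrix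
recover the position probability distribution: `∑ₖ W(n)_{k,l} = |(uₗ)ₙ|²`. -/
theorem wignerW_position_marginal {N : ℕ}
    (P Q : Matrix (Fin (N + 1)) (Fin (N + 1)) ℂ)
    (p q : Fin (N + 1) → ℝ) (hp : Function.Injective p) (hq : Function.Injective q)
    (u : Fin (N + 1) → (Fin (N + 1) → ℂ))
    (hortho : ∀ l l' : Fin (N + 1),
      (star (u l)) ⬝ᵥ (u l') = if l = l' then 1 else 0)
    (heig : ∀ l : Fin (N + 1), Q.mulVec (u l) = (q l : ℂ) • u l)
    (n : Fin (N + 1)) :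
    ∀ l : Fin (N + 1),
      ∑ k : Fin (N + 1), wignerW P Q p q n k l = ((‖u l n‖ : ℝ) : ℂ) ^ 2 := by
  intro l
  set p' : Fin (N + 1) → ℂ := fun k => (p k : ℂ) with hp'
  set q' : Fin (N + 1) → ℂ := fun k => (q k : ℂ) with hq'
  have hp'i : Function.Injective p' := fun a b h => hp (Complex.ofReal_inj.mp h)
  have hq'i : Function.Injective q' := fun a b h => hq (Complex.ofReal_inj.mp h)
  have hdetp : IsUnit (Matrix.vandermonde p').det := by
    rw [isUnit_iff_ne_zero, Matrix.det_vandermonde_ne_zero_iff]; exact hp'i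
  have hdetq : IsUnit (Matrix.vandermonde q').det := by
    rw [isUnit_iff_ne_zero, Matrix.det_vandermonde_ne_zero_iff]; exact hq'i
  set A := ((Matrix.vandermonde p')ᵀ)⁻¹ with hA
  set B := (Matrix.vandermonde q')⁻¹ with hB
  -- column sums of A
  have hAsum : ∀ a : Fin (N + 1), ∑ k, A k a = if a = 0 then 1 else 0 := by
    intro a
    have h1 : A = ((Matrix.vandermonde p')⁻¹)ᵀ := by
      rw [hA, Matrix.transpose_nonsing_inv]
    have h2 : ((Matrix.vandermonde p')⁻¹ * Matrix.vandermonde p') a 0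
        = (1 : Matrix (Fin (N+1)) (Fin (N+1)) ℂ) a 0 := by
      rw [Matrix.nonsing_inv_mul _ hdetp]
    rw [Matrix.mul_apply] at h2
    simp only [Matrix.vandermonde_apply] at h2
    calc ∑ k, A k a = ∑ k, ((Matrix.vandermonde p')⁻¹) a k := by
          rw [h1]; rfl
      _ = ∑ k, ((Matrix.vandermonde p')⁻¹) a k * p' k ^ (0 : Fin (N+1)).val := by
          simp
      _ = (1 : Matrix (Fin (N+1)) (Fin (N+1)) ℂ) a 0 := h2
      _ = if a = 0 then 1 else 0 := by rw [Matrix.one_apply]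
  -- spectral facts
  set U : Matrix (Fin (N + 1)) (Fin (N + 1)) ℂ := Matrix.of fun k m => u m k with hU
  have hUU : Uᴴ * U = 1 := by
    ext a b
    rw [Matrix.mul_apply, Matrix.one_apply]
    have := hortho a b
    rw [dotProduct] at this
    simpa [hU, Matrix.conjTranspose_apply] using this
  have hUUc : U * Uᴴ = 1 := mul_eq_one_comm.mp hUU
  have hQU : Q * U = U * Matrix.diagonal q' := by
    ext k m
    rw [Matrix.mul_apply, Matrix.mul_diagonal]
    have := congrFun (heig m) k
    rw [Matrix.mulVec, dotProduct] at this
    simpa [hU, mul_comm] using this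
  have hQbU : ∀ b : ℕ, Q ^ b * U = U * (Matrix.diagonal q') ^ b := by
    intro b
    induction b with
    | zero => simp
    | succ b ih =>
        rw [pow_succ, pow_succ, Matrix.mul_assoc, hQU, ← Matrix.mul_assoc, ih,
          Matrix.mul_assoc]
  have hQb : ∀ b : ℕ, (Q ^ b) n n
      = ∑ m, q' m ^ b * (u m n * (starRingEnd ℂ) (u m n)) := by
    intro b
    have : Q ^ b = U * (Matrix.diagonal q') ^ b * Uᴴ := by
      rw [← Matrix.mul_one (Q ^ b), ← hUUc, ← Matrix.mul_assoc, hQbU b]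
    rw [this, Matrix.diagonal_pow]
    rw [Matrix.mul_apply]
    congr 1
    ext m
    rw [Matrix.mul_diagonal]
    simp [hU, Matrix.conjTranspose_apply]
    ring
  -- main computation
  have hexp : ∑ k, wignerW P Q p q n k l
      = ∑ b, ∑ a, (∑ k, A k a) * (zMat P Q n a b * B b l) := by
    unfold wignerW
    rw [← hp', ← hq', ← hA, ← hB]
    simp only [Matrix.mul_apply, Finset.sum_mul]
    rw [Finset.sum_comm]
    refine Finset.sum_congr rfl fun b _ => ?_
    rw [Finset.sum_comm]
    refine Finset.sum_congr rfl fun a _ => ?_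
    refine Finset.sum_congr rfl fun k _ => ?_
    ring
  rw [hexp]
  have h0 : ∀ b : Fin (N+1), ∑ a, (∑ k, A k a) * (zMat P Q n a b * B b l)
      = zMat P Q n 0 b * B b l := by
    intro b
    rw [Finset.sum_eq_single 0]
    · rw [hAsum, if_pos rfl, one_mul]
    · intro a _ ha; rw [hAsum, if_neg ha, zero_mul]
    · simp
  simp only [h0]
  have hZ : ∀ b : Fin (N+1), zMat P Q n 0 b
      = ∑ m, q' m ^ (b : ℕ) * (u m n * (starRingEnd ℂ) (u m n)) := by
    intro b
    show weylG P Q (0 : Fin (N+1)).val b.val n n = _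
    rw [Fin.val_zero, weylG_zero_left, hQb]
  simp only [hZ]
  -- swap and collapse
  have hVB : Matrix.vandermonde q' * B = 1 := Matrix.mul_nonsing_inv _ hdetq
  have step1 : ∀ b : Fin (N+1),
      (∑ m, q' m ^ (b : ℕ) * (u m n * (starRingEnd ℂ) (u m n))) * B b l
      = ∑ m, (u m n * (starRingEnd ℂ) (u m n)) * (Matrix.vandermonde q' m b * B b l) := by
    intro b
    rw [Finset.sum_mul]
    congr 1; ext m
    rw [Matrix.vandermonde_apply]
    ring
  simp only [step1]
  rw [Finset.sum_comm]
  have step2 : ∀ m, ∑ b, (u m n * (starRingEnd ℂ) (u m n)) * (Matrix.vandermonde q' m b * B b l)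
      = (u m n * (starRingEnd ℂ) (u m n)) * (Matrix.vandermonde q' * B) m l := by
    intro m
    rw [Matrix.mul_apply, Finset.mul_sum]
  simp only [step2, hVB, Matrix.one_apply]
  rw [Finset.sum_eq_single l]
  · rw [if_pos rfl, mul_one, Complex.mul_conj, ← Complex.sq_norm]
    norm_cast
  · intro m _ hm; rw [if_neg hm, mul_zero]
  · simp
end

section
/- (Proposition 2(2), momentum marginal.) Assume v_0,…,v_N is an orthonormal basis of ℂ^{N+1} such that P v_k = p_k v_k for each k ∈ {0,…,N}. Then for each n and each k ∈ {0,…,N}, the row sums of the Wigner matrix recover the momentum probability distribution: ∑_{l=0}^{N} W(n)_{k,l} = |(v_k)_n|², where (v_k)_n denotes the n-th coordinate of v_k (the momentum wavefunction value ψ_n(p_k)). -/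
open Matrix

lemma weylG_zero_right {N : ℕ} (P Q : Matrix (Fin (N + 1)) (Fin (N + 1)) ℂ) (a : ℕ) :
    weylG P Q a 0 = P ^ a := by
  unfold weylG
  have hfil : (Finset.univ.filter (fun S : Finset (Fin (a + 0)) => S.card = a))
      = {Finset.univ} := by
    ext S
    simp only [Finset.mem_filter, Finset.mem_univ, true_and, Finset.mem_singleton]
    constructor
    · intro h
      apply Finset.eq_univ_of_card
      simpa using h
    · rintro rfl
      simp
  rw [hfil, Finset.sum_singleton]
  simp [List.ofFn_const, List.prod_replicate]

/-- Proposition 2(2), momentum marginal: if `v₀,…,v_N` is an orthonormal basis of `ℂ^{N+1}`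
of eigenvectors of `P` with `P vₖ = pₖ vₖ`, then the row sums of the Wigner matrix
recover the momentum probability distribution: `∑ₗ W(n)_{k,l} = |(vₖ)ₙ|²`. -/
theorem wignerW_momentum_marginal {N : ℕ}
    (P Q : Matrix (Fin (N + 1)) (Fin (N + 1)) ℂ)
    (p q : Fin (N + 1) → ℝ) (hp : Function.Injective p) (hq : Function.Injective q)
    (v : Fin (N + 1) → (Fin (N + 1) → ℂ))
    (hortho : ∀ k k' : Fin (N + 1),
      (star (v k)) ⬝ᵥ (v k') = if k = k' then 1 else 0)
    (heig : ∀ k : Fin (N + 1), P.mulVec (v k) = (p k : ℂ) • v k)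
    (n : Fin (N + 1)) :
    ∀ k : Fin (N + 1),
      ∑ l : Fin (N + 1), wignerW P Q p q n k l = ((‖v k n‖ : ℝ) : ℂ) ^ 2 := by
  classical
  intro k
  set Vp : Matrix (Fin (N + 1)) (Fin (N + 1)) ℂ :=
    Matrix.vandermonde fun k => (p k : ℂ) with hVpdef
  set Vq : Matrix (Fin (N + 1)) (Fin (N + 1)) ℂ :=
    Matrix.vandermonde fun l => (q l : ℂ) with hVqdef
  have hpinj : Function.Injective fun k => ((p k : ℝ) : ℂ) := fun a b h => hp (by
    simpa using congrArg Complex.re h)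
  have hqinj : Function.Injective fun k => ((q k : ℝ) : ℂ) := fun a b h => hq (by
    simpa using congrArg Complex.re h)
  have hVp : IsUnit Vp.det :=
    isUnit_iff_ne_zero.mpr (Matrix.det_vandermonde_ne_zero_iff.mpr hpinj)
  have hVq : IsUnit Vq.det :=
    isUnit_iff_ne_zero.mpr (Matrix.det_vandermonde_ne_zero_iff.mpr hqinj)
  -- row sums of Vq⁻¹
  have hrowq : ∀ a : Fin (N + 1), ∑ l, Vq⁻¹ a l = if a = 0 then 1 else 0 := by
    intro a
    have h := congrFun (congrFun (Matrix.nonsing_inv_mul Vq hVq) a) 0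
    simpa [Matrix.mul_apply, hVqdef, Matrix.vandermonde, Matrix.one_apply] using h
  -- spectral facts
  set U : Matrix (Fin (N + 1)) (Fin (N + 1)) ℂ := Matrix.of fun i j => v j i with hUdef
  have hU1 : Uᴴ * U = 1 := by
    ext a b
    have := hortho a b
    simpa [Matrix.mul_apply, Matrix.conjTranspose_apply, hUdef, dotProduct,
      Matrix.one_apply] using this
  have hU2 : U * Uᴴ = 1 := mul_eq_one_comm.mp hU1
  have hPU : P * U = U * Matrix.diagonal (fun j => ((p j : ℝ) : ℂ)) := by
    ext i j
    have h := congrFun (heig j) i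
    simp only [Matrix.mulVec, dotProduct, Pi.smul_apply, smul_eq_mul] at h
    simp [Matrix.mul_apply, hUdef, Matrix.diagonal, h, mul_comm]
  have hPa : ∀ a : ℕ, P ^ a = U * Matrix.diagonal (fun j => ((p j : ℝ) : ℂ) ^ a) * Uᴴ := by
    intro a
    induction a with
    | zero => simp [hU2]
    | succ a ih =>
      have : P ^ (a + 1) = P * P ^ a := by rw [pow_succ']
      rw [this, ih, ← Matrix.mul_assoc, ← Matrix.mul_assoc, hPU,
        Matrix.mul_assoc U _ _, Matrix.diagonal_mul_diagonal]
      have hd : (fun i => ((p i : ℝ) : ℂ) * ((p i : ℝ) : ℂ) ^ a)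
          = fun j => ((p j : ℝ) : ℂ) ^ (a + 1) := by
        funext j
        exact (pow_succ' ((p j : ℝ) : ℂ) a).symm
      rw [hd]
  have hPann : ∀ a : ℕ, (P ^ a) n n
      = ∑ j, ((p j : ℝ) : ℂ) ^ a * (v j n * (starRingEnd ℂ) (v j n)) := by
    intro a
    rw [hPa a]
    simp only [Matrix.mul_apply, Matrix.diagonal_apply, hUdef, Matrix.conjTranspose_apply,
      Matrix.of_apply, mul_ite, mul_zero, ite_mul, zero_mul, Finset.sum_ite_eq,
      Finset.sum_ite_eq', Finset.mem_univ, if_true, Complex.star_def]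
    apply Finset.sum_congr rfl
    intro j _
    ring
  -- the main computation
  have hW : ∀ l, wignerW P Q p q n k l = ∑ a, ((Vpᵀ)⁻¹ * zMat P Q n) k a * Vq⁻¹ a l := by
    intro l
    rw [wignerW]
    rw [Matrix.mul_apply]
  calc ∑ l, wignerW P Q p q n k l
      = ∑ l, ∑ a, ((Vpᵀ)⁻¹ * zMat P Q n) k a * Vq⁻¹ a l := by
        exact Finset.sum_congr rfl fun l _ => hW l
    _ = ∑ a, ((Vpᵀ)⁻¹ * zMat P Q n) k a * ∑ l, Vq⁻¹ a l := by
        rw [Finset.sum_comm]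
        exact Finset.sum_congr rfl fun a _ => (Finset.mul_sum _ _ _).symm
    _ = ((Vpᵀ)⁻¹ * zMat P Q n) k 0 := by
        rw [Finset.sum_congr rfl fun a _ => by rw [hrowq a]]
        simp
    _ = ∑ a, Vp⁻¹ a k * (P ^ (a : ℕ)) n n := by
        rw [Matrix.mul_apply]
        apply Finset.sum_congr rfl
        intro a _
        rw [← Matrix.transpose_nonsing_inv, Matrix.transpose_apply]
        congr 1
        show zMat P Q n a 0 = (P ^ (a : ℕ)) n n
        simp [zMat, weylG_zero_right]
    _ = ∑ j, (v j n * (starRingEnd ℂ) (v j n)) * ∑ a, Vp j a * Vp⁻¹ a k := by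
        rw [Finset.sum_congr rfl fun a (_ : a ∈ Finset.univ) => by
          rw [hPann (a : ℕ), Finset.mul_sum]]
        rw [Finset.sum_comm]
        apply Finset.sum_congr rfl
        intro j _
        rw [Finset.mul_sum]
        apply Finset.sum_congr rfl
        intro a _
        simp only [hVpdef, Matrix.vandermonde_apply]
        ring
    _ = v k n * (starRingEnd ℂ) (v k n) := by
        have hVpinv : Vp * Vp⁻¹ = 1 := Matrix.mul_nonsing_inv Vp hVp
        have : ∀ j, ∑ a, Vp j a * Vp⁻¹ a k = if j = k then 1 else 0 := by
          intro j
          have h := congrFun (congrFun hVpinv j) k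
          simpa [Matrix.mul_apply, Matrix.one_apply] using h
        rw [Finset.sum_congr rfl fun j _ => by rw [this j]]
        simp
    _ = ((‖v k n‖ : ℝ) : ℂ) ^ 2 := by
        rw [Complex.mul_conj, ← Complex.sq_norm]
        push_cast
        ring
end

section
/- (Proposition 2(3), normalization.) For each n ∈ {0,…,N}, the entries of the Wigner matrix sum to one: ∑_{k=0}^{N} ∑_{l=0}^{N} W(n)_{k,l} = 1. -/
open Matrix

lemma weylG_zero_zero {N : ℕ} (P Q : Matrix (Fin (N + 1)) (Fin (N + 1)) ℂ) :
    weylG P Q 0 0 = 1 := by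
  simp only [weylG, Nat.add_zero, Nat.choose_self, Nat.cast_one, inv_one, one_smul]
  rw [show (Finset.univ.filter fun S : Finset (Fin 0) => S.card = 0) = {∅} by decide]
  simp

lemma vandermonde_inv_mulVec_one {N : ℕ} (x : Fin (N + 1) → ℝ)
    (hx : Function.Injective x) :
    (Matrix.vandermonde fun k => (x k : ℂ))⁻¹ *ᵥ (fun _ => (1 : ℂ)) =
      Pi.single (0 : Fin (N + 1)) 1 := by
  have hdet : (Matrix.vandermonde fun k => (x k : ℂ)).det ≠ 0 := by
    rw [Matrix.det_vandermonde_ne_zero_iff]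
    exact fun a b h => hx (Complex.ofReal_injective h)
  have hmul : (Matrix.vandermonde fun k => (x k : ℂ)) *ᵥ
      Pi.single (0 : Fin (N + 1)) 1 = fun _ => (1 : ℂ) := by
    funext k
    simp [Matrix.mulVec_single, Matrix.vandermonde]
  calc (Matrix.vandermonde fun k => (x k : ℂ))⁻¹ *ᵥ (fun _ => (1 : ℂ))
      = (Matrix.vandermonde fun k => (x k : ℂ))⁻¹ *ᵥ
        ((Matrix.vandermonde fun k => (x k : ℂ)) *ᵥ Pi.single (0 : Fin (N + 1)) 1) := by
        rw [hmul]
    _ = ((Matrix.vandermonde fun k => (x k : ℂ))⁻¹ *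
        (Matrix.vandermonde fun k => (x k : ℂ))) *ᵥ Pi.single (0 : Fin (N + 1)) 1 := by
        rw [Matrix.mulVec_mulVec]
    _ = Pi.single (0 : Fin (N + 1)) 1 := by
        rw [Matrix.nonsing_inv_mul _ (isUnit_iff_ne_zero.mpr hdet), Matrix.one_mulVec]

/-- Proposition 2(3), normalization: the entries of the Wigner matrix sum to one. -/
theorem wignerW_sum_eq_one {N : ℕ}
    (P Q : Matrix (Fin (N + 1)) (Fin (N + 1)) ℂ)
    (p q : Fin (N + 1) → ℝ) (hp : Function.Injective p) (hq : Function.Injective q)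
    (n : Fin (N + 1)) :
    ∑ k : Fin (N + 1), ∑ l : Fin (N + 1), wignerW P Q p q n k l = 1 := by
  have key : ∑ k : Fin (N + 1), ∑ l : Fin (N + 1), wignerW P Q p q n k l =
      (fun _ => (1 : ℂ)) ⬝ᵥ (wignerW P Q p q n *ᵥ (fun _ => (1 : ℂ))) := by
    simp [dotProduct, Matrix.mulVec]
  rw [key]
  unfold wignerW
  rw [Matrix.mul_assoc, ← Matrix.mulVec_mulVec, ← Matrix.mulVec_mulVec,
    vandermonde_inv_mulVec_one q hq, Matrix.dotProduct_mulVec,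
    ← Matrix.transpose_nonsing_inv, Matrix.vecMul_transpose,
    vandermonde_inv_mulVec_one p hp]
  simp [Matrix.mulVec, dotProduct, Pi.single_apply, zMat, weylG_zero_zero]
end

section
/- (Cross Wigner function, position marginal.) Assume u_0,…,u_N is an orthonormal basis of ℂ^{N+1} such that Q u_l = q_l u_l for each l ∈ {0,…,N}. Then for all n',n ∈ {0,…,N} and each l ∈ {0,…,N}: ∑_{k=0}^{N} W(n',n)_{k,l} = (u_l)_{n'} · conj((u_l)_n), where (u_l)_m denotes the m-th coordinate of u_l. -/
open Matrix

/-- The matrix `Z(n',n)` with entries `Z(n',n)_{a,b} = (Ĝ_{a,b}(P,Q))_{n',n}`. -/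
noncomputable def zMatCross {N : ℕ} (P Q : Matrix (Fin (N + 1)) (Fin (N + 1)) ℂ)
    (n' n : Fin (N + 1)) : Matrix (Fin (N + 1)) (Fin (N + 1)) ℂ :=
  Matrix.of fun a b : Fin (N + 1) => weylG P Q a.val b.val n' n

/-- The cross Wigner matrix `W(n',n) = V(p)⁻ᵀ ⬝ Z(n',n) ⬝ V(q)⁻¹`, where `V(x)` is the
Vandermonde matrix on the spectrum `x` (regarded as a complex matrix). -/
noncomputable def wignerCross {N : ℕ} (P Q : Matrix (Fin (N + 1)) (Fin (N + 1)) ℂ)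
    (p q : Fin (N + 1) → ℝ) (n' n : Fin (N + 1)) : Matrix (Fin (N + 1)) (Fin (N + 1)) ℂ :=
  ((Matrix.vandermonde fun k => (p k : ℂ))ᵀ)⁻¹ * zMatCross P Q n' n *
    (Matrix.vandermonde fun l => (q l : ℂ))⁻¹

lemma spectral {N : ℕ} (Q : Matrix (Fin (N + 1)) (Fin (N + 1)) ℂ)
    (q : Fin (N + 1) → ℝ) (u : Fin (N + 1) → (Fin (N + 1) → ℂ))
    (hortho : ∀ l l' : Fin (N + 1),
      (star (u l)) ⬝ᵥ (u l') = if l = l' then 1 else 0)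
    (heig : ∀ l : Fin (N + 1), Q.mulVec (u l) = (q l : ℂ) • u l)
    (b : ℕ) (n' n : Fin (N + 1)) :
    (Q ^ b) n' n = ∑ m : Fin (N + 1), u m n' * (q m : ℂ) ^ b * (starRingEnd ℂ) (u m n) := by
  set U : Matrix (Fin (N + 1)) (Fin (N + 1)) ℂ := Matrix.of (fun i l => u l i) with hU
  have hU1 : Uᴴ * U = 1 := by
    ext l l'
    have := hortho l l'
    simpa [Matrix.mul_apply, Matrix.conjTranspose_apply, dotProduct, Matrix.one_apply, hU] using this
  have hU2 : U * Uᴴ = 1 := mul_eq_one_comm.mp hU1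
  have hQU : Q * U = U * Matrix.diagonal (fun m => (q m : ℂ)) := by
    ext i l
    have := congrFun (heig l) i
    simp only [Matrix.mulVec, dotProduct, Pi.smul_apply, smul_eq_mul] at this
    simp only [Matrix.mul_apply, hU, Matrix.of_apply, this]
    rw [Finset.sum_eq_single l] <;> simp +contextual [Matrix.diagonal_apply, mul_comm]
  have hQ : ∀ b : ℕ, Q ^ b = U * Matrix.diagonal (fun m => (q m : ℂ) ^ b) * Uᴴ := by
    intro b
    induction b with
    | zero => simp [hU2]
    | succ b ih =>
        rw [pow_succ, ih]
        have hQ2 : Q = U * Matrix.diagonal (fun m => (q m : ℂ)) * Uᴴ := by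
          rw [← hQU, Matrix.mul_assoc, hU2, Matrix.mul_one]
        rw [hQ2]
        simp only [Matrix.mul_assoc]
        rw [← Matrix.mul_assoc Uᴴ U, hU1, Matrix.one_mul]
        rw [← Matrix.mul_assoc (Matrix.diagonal _), Matrix.diagonal_mul_diagonal]
        simp [pow_succ, Matrix.mul_assoc]
  rw [hQ b]
  simp only [Matrix.mul_apply, Matrix.mul_diagonal, Matrix.conjTranspose_apply, hU,
    Matrix.of_apply, Matrix.diagonal_apply, Finset.sum_mul]
  rw [Finset.sum_comm]
  apply Finset.sum_congr rfl
  intro m _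
  rw [Finset.sum_eq_single m] <;> simp +contextual [RCLike.star_def]
  intro m' hm'; simp [Ne.symm hm']

/-- Cross Wigner function, position marginal: if `u₀,…,u_N` is an orthonormal basis of
`ℂ^{N+1}` of eigenvectors of `Q` with `Q uₗ = qₗ uₗ`, then
`∑ₖ W(n',n)_{k,l} = (uₗ)_{n'} ⬝ conj((uₗ)ₙ)`. -/
theorem wignerCross_position_marginal {N : ℕ}
    (P Q : Matrix (Fin (N + 1)) (Fin (N + 1)) ℂ)
    (p q : Fin (N + 1) → ℝ) (hp : Function.Injective p) (hq : Function.Injective q)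
    (u : Fin (N + 1) → (Fin (N + 1) → ℂ))
    (hortho : ∀ l l' : Fin (N + 1),
      (star (u l)) ⬝ᵥ (u l') = if l = l' then 1 else 0)
    (heig : ∀ l : Fin (N + 1), Q.mulVec (u l) = (q l : ℂ) • u l)
    (n' n : Fin (N + 1)) :
    ∀ l : Fin (N + 1),
      ∑ k : Fin (N + 1), wignerCross P Q p q n' n k l =
        u l n' * (starRingEnd ℂ) (u l n) := by
  intro l
  classical
  set Vp := Matrix.vandermonde (fun k => (p k : ℂ)) with hVpdef
  set Vq := Matrix.vandermonde (fun k => (q k : ℂ)) with hVqdef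
  have hdp : Vp.det ≠ 0 :=
    Matrix.det_vandermonde_ne_zero_iff.mpr (fun a b hab => hp (by exact_mod_cast hab))
  have hdq : Vq.det ≠ 0 :=
    Matrix.det_vandermonde_ne_zero_iff.mpr (fun a b hab => hq (by exact_mod_cast hab))
  have hVp : Vp⁻¹ * Vp = 1 := Matrix.nonsing_inv_mul _ (isUnit_iff_ne_zero.mpr hdp)
  have hVq : Vq * Vq⁻¹ = 1 := Matrix.mul_nonsing_inv _ (isUnit_iff_ne_zero.mpr hdq)
  have hsum1 : ∀ a : Fin (N+1), (∑ k, (Vpᵀ)⁻¹ k a) = if a = 0 then 1 else 0 := by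
    intro a
    have ht : (Vpᵀ)⁻¹ = (Vp⁻¹)ᵀ := (Matrix.transpose_nonsing_inv Vp).symm
    have h2 : ∑ k, (Vp⁻¹)ᵀ k a = (Vp⁻¹ * Vp) a 0 := by
      rw [Matrix.mul_apply]
      apply Finset.sum_congr rfl
      intro k _
      simp [hVpdef, Matrix.vandermonde]
    rw [ht, h2, hVp, Matrix.one_apply]
  have hZ0 : ∀ b : Fin (N+1), zMatCross P Q n' n 0 b
      = ∑ m, u m n' * (q m : ℂ) ^ (b : ℕ) * (starRingEnd ℂ) (u m n) := by
    intro b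
    show weylG P Q (0 : Fin (N+1)).val b.val n' n = _
    rw [show ((0 : Fin (N+1)).val) = 0 from rfl, weylG_zero_left,
      spectral Q q u hortho heig]
  calc ∑ k, wignerCross P Q p q n' n k l
      = ∑ k, ∑ b, ∑ a, (Vpᵀ)⁻¹ k a * (zMatCross P Q n' n a b * Vq⁻¹ b l) := by
        apply Finset.sum_congr rfl; intro k _
        simp [wignerCross, Matrix.mul_apply, Finset.sum_mul, mul_assoc, ← hVpdef, ← hVqdef]
    _ = ∑ b, ∑ a, (∑ k, (Vpᵀ)⁻¹ k a) * (zMatCross P Q n' n a b * Vq⁻¹ b l) := by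
        rw [Finset.sum_comm]
        apply Finset.sum_congr rfl; intro b _
        rw [Finset.sum_comm]
        apply Finset.sum_congr rfl; intro a _
        rw [Finset.sum_mul]
    _ = ∑ b, zMatCross P Q n' n 0 b * Vq⁻¹ b l := by
        apply Finset.sum_congr rfl; intro b _
        rw [Finset.sum_eq_single (0 : Fin (N+1))] <;> simp +contextual [hsum1]
    _ = ∑ b : Fin (N+1), (∑ m, u m n' * (q m : ℂ) ^ (b : ℕ) * (starRingEnd ℂ) (u m n)) * Vq⁻¹ b l := by
        apply Finset.sum_congr rfl; intro b _
        rw [hZ0]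
    _ = ∑ m, (u m n' * (starRingEnd ℂ) (u m n)) * ∑ b, Vq m b * Vq⁻¹ b l := by
        simp only [Finset.sum_mul]
        rw [Finset.sum_comm]
        apply Finset.sum_congr rfl; intro m _
        rw [Finset.mul_sum]
        apply Finset.sum_congr rfl; intro b _
        simp [hVqdef, Matrix.vandermonde]
        ring
    _ = u l n' * (starRingEnd ℂ) (u l n) := by
        have h1 : ∀ m, ∑ b, Vq m b * Vq⁻¹ b l = (1 : Matrix (Fin (N+1)) (Fin (N+1)) ℂ) m l :=
          fun m => by rw [← Matrix.mul_apply, hVq]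
        rw [Finset.sum_eq_single l] <;> simp +contextual [h1, Matrix.one_apply]
end

section
/- (Cross Wigner function, total sum.) For all n',n ∈ {0,…,N}, the entries of the cross Wigner matrix sum to the Kronecker delta: ∑_{k=0}^{N} ∑_{l=0}^{N} W(n',n)_{k,l} = δ_{n',n}. -/
open Matrix

lemma vand_inv_mulVec_one {N : ℕ} (x : Fin (N+1) → ℝ) (hx : Function.Injective x) :
    (Matrix.vandermonde fun k => (x k : ℂ))⁻¹ *ᵥ (fun _ => (1:ℂ)) = Pi.single 0 1 := by
  have hx' : Function.Injective (fun k => (x k : ℂ)) := fun a b h => by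
    exact hx (Complex.ofReal_injective h)
  have hdet : (Matrix.vandermonde fun k => (x k : ℂ)).det ≠ 0 :=
    Matrix.det_vandermonde_ne_zero_iff.mpr hx'
  have h1 : (Matrix.vandermonde fun k => (x k : ℂ)) *ᵥ Pi.single 0 1 = fun _ => (1:ℂ) := by
    funext r
    simp [Matrix.mulVec, dotProduct, Pi.single_apply, Matrix.vandermonde]
  rw [← h1, Matrix.mulVec_mulVec, Matrix.nonsing_inv_mul _ hdet.isUnit, Matrix.one_mulVec]

/-- Cross Wigner function, total sum: the entries of the cross Wigner matrix sum to the
Kronecker delta `δ_{n',n}`. -/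
theorem wignerCross_sum_eq_delta {N : ℕ}
    (P Q : Matrix (Fin (N + 1)) (Fin (N + 1)) ℂ)
    (p q : Fin (N + 1) → ℝ) (hp : Function.Injective p) (hq : Function.Injective q)
    (n' n : Fin (N + 1)) :
    ∑ k : Fin (N + 1), ∑ l : Fin (N + 1), wignerCross P Q p q n' n k l =
      if n' = n then 1 else 0 := by
  set u : Fin (N+1) → ℂ := fun _ => 1 with hu
  have htot : ∑ k : Fin (N + 1), ∑ l : Fin (N + 1), wignerCross P Q p q n' n k l
      = u ⬝ᵥ (wignerCross P Q p q n' n *ᵥ u) := by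
    simp [dotProduct, Matrix.mulVec, hu]
  rw [htot, Matrix.dotProduct_mulVec]
  have hA : u ᵥ* ((Matrix.vandermonde fun k => (p k : ℂ))ᵀ)⁻¹ = Pi.single 0 1 := by
    rw [← Matrix.transpose_nonsing_inv, Matrix.vecMul_transpose]
    exact vand_inv_mulVec_one p hp
  have hB : (Matrix.vandermonde fun l => (q l : ℂ))⁻¹ *ᵥ u = Pi.single 0 1 :=
    vand_inv_mulVec_one q hq
  rw [wignerCross, Matrix.mul_assoc, ← Matrix.vecMul_vecMul, hA,
    ← Matrix.dotProduct_mulVec, ← Matrix.mulVec_mulVec, hB]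
  have hz : zMatCross P Q n' n *ᵥ Pi.single 0 1 = fun a => zMatCross P Q n' n a 0 := by
    funext a
    simp [Matrix.mulVec, dotProduct, Pi.single_apply]
  rw [hz]
  have hdot : (Pi.single (0 : Fin (N+1)) (1:ℂ)) ⬝ᵥ (fun a => zMatCross P Q n' n a 0)
      = zMatCross P Q n' n 0 0 := by
    simp [dotProduct, Pi.single_apply]
  rw [hdot]
  have : weylG P Q 0 0 = (1 : Matrix (Fin (N+1)) (Fin (N+1)) ℂ) := by
    simp [weylG, Finset.filter_singleton, Finset.eq_empty_of_isEmpty]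
  simp [zMatCross, this, Matrix.one_apply]
end
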